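/- For the weighted fan graphs C^m_{P_n} and C^m_{P_{n+1}} (m > 1 an integer), the apex-to-endpoint effective resistances satisfy 0 < R_{C^m_{P_n}}[a_1, b] − R_{C^m_{P_{n+1}}}[a_1, b] < 1/m^n. -/

import Mathlib

open Matrix Finset

open Classical in
/-- The Moore–Penrose pseudoinverse of a real square matrix, defined via the
four Penrose conditions (it is unique when it exists). -/
noncomputable def Matrix.mpinv {m : Type*} [Fintype m] [DecidableEq m]
    (A : Matrix m m ℝ) : Matrix m m ℝ :=
  if h : ∃ B : Matrix m m ℝ,
      A * B * A = A ∧ B * A * B = B ∧ (A * B)ᵀ = A * B ∧ (B * A)ᵀ = B * A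
  then h.choose else 0

/-- Effective resistance between `u` and `v` with respect to a (weighted)
Laplacian matrix `L`:  `(e_u - e_v)ᵀ L⁺ (e_u - e_v)`. -/
noncomputable def effRes {m : Type*} [Fintype m] [DecidableEq m]
    (L : Matrix m m ℝ) (u v : m) : ℝ :=
  (Pi.single u 1 - Pi.single v 1) ⬝ᵥ (L.mpinv *ᵥ (Pi.single u 1 - Pi.single v 1))

/-- The (real) Laplacian matrix of a simple graph. -/
noncomputable def lapm {V : Type*} [Fintype V] [DecidableEq V]
    (G : SimpleGraph V) : Matrix V V ℝ :=
  letI := Classical.decRel G.Adj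
  G.lapMatrix ℝ

/-- Resistance distance between two vertices of a simple graph. -/
noncomputable def resDist {V : Type*} [Fintype V] [DecidableEq V]
    (G : SimpleGraph V) (u v : V) : ℝ :=
  effRes (lapm G) u v

/-- Resistance diameter of a simple graph. -/
noncomputable def resDiam {V : Type*} [Fintype V] [DecidableEq V]
    (G : SimpleGraph V) : ℝ :=
  ⨆ p : V × V, resDist G p.1 p.2

/-- The weighted Laplacian of the cone over `G` with apex `Sum.inr ()`:
edges of `G` have conductance `1` (unit resistance), and each vertex of `G`
is joined to the apex by an edge of conductance `m` (resistance `1/m`). -/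
noncomputable def coneLap {V : Type*} [Fintype V] [DecidableEq V]
    (G : SimpleGraph V) (m : ℝ) : Matrix (V ⊕ Unit) (V ⊕ Unit) ℝ :=
  letI := Classical.decRel G.Adj
  let W : Matrix (V ⊕ Unit) (V ⊕ Unit) ℝ := fun i j =>
    match i, j with
    | Sum.inl a, Sum.inl b => if G.Adj a b then 1 else 0
    | Sum.inl _, Sum.inr _ => m
    | Sum.inr _, Sum.inl _ => m
    | Sum.inr _, Sum.inr _ => 0
  Matrix.of fun i j => (if i = j then ∑ k, W i k else 0) - W i j

/-- The `k`-dimensional hypercube graph `Q_k`. -/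
def hypercube (k : ℕ) : SimpleGraph (Fin k → Bool) where
  Adj x y := (Finset.univ.filter fun i => x i ≠ y i).card = 1
  symm := by
    constructor
    intro x y h
    rw [← h]
    congr 1
    ext i
    simp [ne_comm]
  loopless := by constructor; intro x; simp

/-- The join `G + H` of two graphs on disjoint vertex sets. -/
def graphJoin {V W : Type*} (G : SimpleGraph V) (H : SimpleGraph W) :
    SimpleGraph (V ⊕ W) where
  Adj x y :=
    match x, y with
    | Sum.inl a, Sum.inl b => G.Adj a b
    | Sum.inr a, Sum.inr b => H.Adj a b
    | Sum.inl _, Sum.inr _ => True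
    | Sum.inr _, Sum.inl _ => True
  symm := by
    constructor
    rintro (a | a) (b | b) h
    · exact G.adj_symm h
    · trivial
    · trivial
    · exact H.adj_symm h
  loopless := by
    constructor
    rintro (a | a) h
    · exact G.irrefl h
    · exact H.irrefl h

set_option linter.unusedSectionVars false
set_option linter.unusedVariables false
set_option linter.unnecessarySeqFocus false
set_option maxHeartbeats 1000000

section MP
variable {K : Type*} [Fintype K] [DecidableEq K]

def IsMP (A B : Matrix K K ℝ) : Prop :=
  A * B * A = A ∧ B * A * B = B ∧ (A * B)ᵀ = A * B ∧ (B * A)ᵀ = B * A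

lemma isMP_unique {A B C : Matrix K K ℝ} (hB : IsMP A B) (hC : IsMP A C) : B = C := by
  obtain ⟨b1, b2, b3, b4⟩ := hB
  obtain ⟨c1, c2, c3, c4⟩ := hC
  have hAB : A * B = A * C := by
    calc A * B = (A * B)ᵀ := b3.symm
    _ = Bᵀ * Aᵀ := by rw [Matrix.transpose_mul]
    _ = Bᵀ * (A * C * A)ᵀ := by rw [c1]
    _ = Bᵀ * (Aᵀ * (A * C)ᵀ) := by rw [Matrix.transpose_mul]
    _ = Bᵀ * (Aᵀ * (A * C)) := by rw [c3]
    _ = (Bᵀ * Aᵀ) * (A * C) := by simp only [Matrix.mul_assoc]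
    _ = (A * B)ᵀ * (A * C) := by rw [Matrix.transpose_mul]
    _ = (A * B) * (A * C) := by rw [b3]
    _ = (A * B * A) * C := by simp only [Matrix.mul_assoc]
    _ = A * C := by rw [b1]
  have hBA : B * A = C * A := by
    calc B * A = (B * A)ᵀ := b4.symm
    _ = Aᵀ * Bᵀ := by rw [Matrix.transpose_mul]
    _ = (A * C * A)ᵀ * Bᵀ := by rw [c1]
    _ = (A * (C * A))ᵀ * Bᵀ := by rw [Matrix.mul_assoc]
    _ = ((C * A)ᵀ * Aᵀ) * Bᵀ := by rw [Matrix.transpose_mul]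
    _ = (C * A) * (Aᵀ * Bᵀ) := by rw [c4, Matrix.mul_assoc]
    _ = (C * A) * (B * A)ᵀ := by rw [Matrix.transpose_mul]
    _ = (C * A) * (B * A) := by rw [b4]
    _ = C * (A * B * A) := by simp only [Matrix.mul_assoc]
    _ = C * A := by rw [b1]
  calc B = B * A * B := b2.symm
  _ = C * A * B := by rw [hBA]
  _ = C * (A * B) := by rw [Matrix.mul_assoc]
  _ = C * (A * C) := by rw [hAB]
  _ = C * A * C := by rw [Matrix.mul_assoc]
  _ = C := c2

lemma mpinv_eq {A B : Matrix K K ℝ} (hB : IsMP A B) : A.mpinv = B := by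
  have h : ∃ B : Matrix K K ℝ,
      A * B * A = A ∧ B * A * B = B ∧ (A * B)ᵀ = A * B ∧ (B * A)ᵀ = B * A := ⟨B, hB⟩
  rw [Matrix.mpinv, dif_pos h]
  exact isMP_unique h.choose_spec hB


variable [Nonempty K]

lemma colsum_zero (L : Matrix K K ℝ) (hsym : Lᵀ = L)
    (h1 : L *ᵥ (fun _ => (1:ℝ)) = 0) (j : K) : ∑ i, L i j = 0 := by
  have h := congrFun h1 j
  simp only [Matrix.mulVec, dotProduct, mul_one, Pi.zero_apply] at h
  calc ∑ i, L i j = ∑ i, Lᵀ j i := rfl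
  _ = ∑ i, L j i := by rw [hsym]
  _ = 0 := h

lemma rowsum_zero (L : Matrix K K ℝ)
    (h1 : L *ᵥ (fun _ => (1:ℝ)) = 0) (i : K) : ∑ j, L i j = 0 := by
  have h := congrFun h1 i
  simpa only [Matrix.mulVec, dotProduct, mul_one, Pi.zero_apply] using h

lemma effRes_eq_of_solution (L : Matrix K K ℝ) (hsym : Lᵀ = L)
    (h1 : L *ᵥ (fun _ => (1:ℝ)) = 0)
    (hker : ∀ y : K → ℝ, L *ᵥ y = 0 → ∃ c : ℝ, ∀ i, y i = c)
    (u v : K) (huv : u ≠ v) (x : K → ℝ)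
    (hx : L *ᵥ x = Pi.single u 1 - Pi.single v 1) :
    effRes L u v = x u - x v := by
  classical
  set N : ℝ := (Fintype.card K : ℝ) with hNdef
  have hN0 : 0 < N := by
    simp only [hNdef, Nat.cast_pos]
    exact Fintype.card_pos
  set Q : Matrix K K ℝ := Matrix.of (fun _ _ => 1 / N) with hQdef
  have hQapp : ∀ i j, Q i j = 1 / N := fun i j => rfl
  have hconst : ∀ c : ℝ, L *ᵥ (fun _ => c) = 0 := by
    intro c
    have : (fun _ : K => c) = c • (fun _ : K => (1:ℝ)) := by funext i; simp
    rw [this, Matrix.mulVec_smul, h1, smul_zero]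
  have hQmul : ∀ y : K → ℝ, Q *ᵥ y = fun _ => (∑ i, y i) / N := by
    intro y; funext i
    simp only [Matrix.mulVec, dotProduct, hQapp]
    rw [Finset.sum_div]
    refine Finset.sum_congr rfl fun j _ => ?_
    ring
  have hLQ : L * Q = 0 := by
    ext i j
    simp only [Matrix.mul_apply, hQapp, Matrix.zero_apply]
    rw [← Finset.sum_mul, rowsum_zero L h1, zero_mul]
  have hQL : Q * L = 0 := by
    ext i j
    simp only [Matrix.mul_apply, hQapp, Matrix.zero_apply]
    rw [← Finset.mul_sum, colsum_zero L hsym h1, mul_zero]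
  have hcard : ((Finset.univ.card : ℕ) : ℝ) = N := rfl
  have hQQ : Q * Q = Q := by
    ext i j
    simp only [Matrix.mul_apply, hQapp]
    rw [Finset.sum_const, nsmul_eq_mul, hcard]
    field_simp
  have hQT : Qᵀ = Q := by ext i j; simp [hQapp, Matrix.transpose_apply]
  set A : Matrix K K ℝ := L + Q with hAdef
  have hdet : IsUnit A.det := by
    rw [isUnit_iff_ne_zero]
    intro hd
    obtain ⟨y, hy0, hy⟩ := (Matrix.exists_mulVec_eq_zero_iff).2 hd
    have hsum : ∑ i, y i = 0 := by
      have h2 : ∑ i, (A *ᵥ y) i = 0 := by rw [hy]; simp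
      rw [hAdef] at h2
      simp only [Matrix.add_mulVec, Pi.add_apply, Finset.sum_add_distrib] at h2
      have hL : ∑ i, (L *ᵥ y) i = 0 := by
        simp only [Matrix.mulVec, dotProduct]
        rw [Finset.sum_comm]
        have : ∀ j, ∑ i, L i j * y j = 0 := by
          intro j
          rw [← Finset.sum_mul, colsum_zero L hsym h1, zero_mul]
        simp [this]
      have hQ : ∑ i, (Q *ᵥ y) i = ∑ i, y i := by
        rw [hQmul]
        rw [Finset.sum_const, nsmul_eq_mul, hcard]
        field_simp
      rw [hL, hQ, zero_add] at h2
      exact h2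
    have hQy : Q *ᵥ y = 0 := by
      rw [hQmul, hsum]; funext i; simp
    have hLy : L *ᵥ y = 0 := by
      have := hy
      rw [hAdef, Matrix.add_mulVec, hQy, add_zero] at this
      exact this
    obtain ⟨c, hc⟩ := hker y hLy
    have : c = 0 := by
      have : ∑ i, y i = N * c := by
        rw [Finset.sum_congr rfl fun i _ => hc i, Finset.sum_const, nsmul_eq_mul, hcard]
      rw [hsum] at this
      have := this.symm
      rcases mul_eq_zero.1 this with h | h
      · exact absurd h (ne_of_gt hN0)
      · exact h
    apply hy0
    funext i
    rw [hc i, this]; rfl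
  have hAAi : A * A⁻¹ = 1 := Matrix.mul_nonsing_inv A hdet
  have hAiA : A⁻¹ * A = 1 := Matrix.nonsing_inv_mul A hdet
  have hAQ : A * Q = Q := by rw [hAdef, Matrix.add_mul, hLQ, hQQ, zero_add]
  have hQA : Q * A = Q := by rw [hAdef, Matrix.mul_add, hQL, hQQ, zero_add]
  have hAiQ : A⁻¹ * Q = Q := by
    conv_lhs => rw [← hAQ, ← Matrix.mul_assoc, hAiA, Matrix.one_mul]
  have hQAi : Q * A⁻¹ = Q := by
    conv_lhs => rw [← hQA, Matrix.mul_assoc, hAAi, Matrix.mul_one]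
  set B : Matrix K K ℝ := A⁻¹ - Q with hBdef
  have hLB : L * B = 1 - Q := by
    have hLA : L * A⁻¹ = 1 - Q * A⁻¹ := by
      have : L = A - Q := by rw [hAdef]; abel
      rw [this, Matrix.sub_mul, hAAi]
    rw [hBdef, Matrix.mul_sub, hLA, hQAi, hLQ, sub_zero]
  have hBL : B * L = 1 - Q := by
    have hAL : A⁻¹ * L = 1 - A⁻¹ * Q := by
      have : L = A - Q := by rw [hAdef]; abel
      rw [this, Matrix.mul_sub, hAiA]
    rw [hBdef, Matrix.sub_mul, hAL, hAiQ, hQL, sub_zero]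
  have hQB : Q * B = 0 := by rw [hBdef, Matrix.mul_sub, hQAi, hQQ, sub_self]
  have hMP : IsMP L B := by
    refine ⟨?_, ?_, ?_, ?_⟩
    · rw [hLB, Matrix.sub_mul, Matrix.one_mul, hQL, sub_zero]
    · rw [hBL, Matrix.sub_mul, Matrix.one_mul, hQB, sub_zero]
    · rw [hLB, Matrix.transpose_sub, Matrix.transpose_one, hQT]
    · rw [hBL, Matrix.transpose_sub, Matrix.transpose_one, hQT]
  have hmp : L.mpinv = B := mpinv_eq hMP
  set d : K → ℝ := Pi.single u 1 - Pi.single v 1 with hddef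
  have hdsum : ∑ i, d i = 0 := by
    simp only [hddef, Pi.sub_apply, Finset.sum_sub_distrib]
    rw [Finset.sum_pi_single', Finset.sum_pi_single']
    simp
  have hQd : Q *ᵥ d = 0 := by rw [hQmul, hdsum]; funext i; simp
  set c : ℝ := (∑ i, x i) / N with hcdef
  have hAx : A *ᵥ (x - fun _ => c) = d := by
    rw [Matrix.mulVec_sub]
    rw [hAdef, Matrix.add_mulVec, Matrix.add_mulVec, hx, hconst, hQmul, hQmul]
    funext i
    simp only [Pi.sub_apply, Pi.add_apply, Pi.zero_apply, hddef]
    rw [Finset.sum_const, nsmul_eq_mul, hcard]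
    have hNc : N * c / N = c := by field_simp
    rw [hNc]
    ring
  have hAid : A⁻¹ *ᵥ d = x - fun _ => c := by
    rw [← hAx, Matrix.mulVec_mulVec, hAiA, Matrix.one_mulVec]
  have hBd : B *ᵥ d = x - fun _ => c := by
    rw [hBdef, Matrix.sub_mulVec, hAid, hQd, sub_zero]
  unfold effRes
  rw [hmp, ← hddef, hBd, hddef]
  simp only [sub_dotProduct, single_dotProduct, one_mul, Pi.sub_apply]
  ring
end MP




section Cone
variable {V : Type*} [Fintype V] [DecidableEq V] (G : SimpleGraph V) (M : ℝ)

noncomputable def Wf (G : SimpleGraph V) (M : ℝ) : (V ⊕ Unit) → (V ⊕ Unit) → ℝ :=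
  letI := Classical.decRel G.Adj
  fun i j =>
    match i, j with
    | Sum.inl a, Sum.inl b => if G.Adj a b then 1 else 0
    | Sum.inl _, Sum.inr _ => M
    | Sum.inr _, Sum.inl _ => M
    | Sum.inr _, Sum.inr _ => 0

lemma coneLap_apply (i j : V ⊕ Unit) :
    coneLap G M i j = (if i = j then ∑ k, Wf G M i k else 0) - Wf G M i j := rfl

lemma Wf_symm (i j : V ⊕ Unit) : Wf G M i j = Wf G M j i := by
  classical
  rcases i with a | a <;> rcases j with b | b <;> simp only [Wf]
  · by_cases h : G.Adj a b
    · rw [if_pos h, if_pos (G.adj_symm h)]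
    · rw [if_neg h, if_neg (fun h' => h (G.adj_symm h'))]

lemma Wf_nonneg (hM : 0 ≤ M) (i j : V ⊕ Unit) : 0 ≤ Wf G M i j := by
  classical
  rcases i with a | a <;> rcases j with b | b <;> simp [Wf, hM]
  split <;> norm_num

lemma coneLap_mulVec (x : V ⊕ Unit → ℝ) (i : V ⊕ Unit) :
    (coneLap G M *ᵥ x) i = ∑ j, Wf G M i j * (x i - x j) := by
  simp only [Matrix.mulVec, dotProduct, coneLap_apply]
  have h1 : ∀ j, ((if i = j then (∑ k, Wf G M i k) else 0) - Wf G M i j) * x j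
      = (if i = j then (∑ k, Wf G M i k) * x j else 0) - Wf G M i j * x j := by
    intro j; by_cases h : i = j <;> simp [h] <;> ring
  rw [Finset.sum_congr rfl (fun j _ => h1 j), Finset.sum_sub_distrib,
    Finset.sum_ite_eq univ i (fun j => (∑ k, Wf G M i k) * x j), if_pos (mem_univ i),
    Finset.sum_mul, ← Finset.sum_sub_distrib]
  exact Finset.sum_congr rfl fun j _ => by ring

lemma coneLap_transpose : (coneLap G M)ᵀ = coneLap G M := by
  ext i j
  simp only [Matrix.transpose_apply, coneLap_apply]
  by_cases h : i = j
  · subst h; simp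
  · rw [if_neg h, if_neg (Ne.symm h), Wf_symm]

lemma coneLap_mulVec_one :
    coneLap G M *ᵥ (fun _ => (1:ℝ)) = 0 := by
  funext i
  rw [coneLap_mulVec]
  simp

lemma coneLap_ker (hM : 0 < M) (x : V ⊕ Unit → ℝ)
    (hx : coneLap G M *ᵥ x = 0) : ∃ c : ℝ, ∀ i, x i = c := by
  classical
  obtain ⟨i0, hi0⟩ := Finite.exists_max x
  -- step 1: x (inr ()) is a maximum
  have hmax : ∀ j, x j ≤ x (Sum.inr ()) := by
    have hrow := congrFun hx i0
    rw [coneLap_mulVec] at hrow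
    have hterm : ∀ j ∈ univ, (0:ℝ) ≤ Wf G M i0 j * (x i0 - x j) := by
      intro j _
      exact mul_nonneg (Wf_nonneg G M (le_of_lt hM) i0 j) (by linarith [hi0 j])
    have hz := (Finset.sum_eq_zero_iff_of_nonneg hterm).1 (by rw [hrow]; rfl)
    rcases i0 with a | a
    · have := hz (Sum.inr ()) (Finset.mem_univ _)
      have hW : Wf G M (Sum.inl a) (Sum.inr ()) = M := rfl
      rw [hW] at this
      have : x (Sum.inl a) - x (Sum.inr ()) = 0 := by
        rcases mul_eq_zero.1 this with h | h
        · exact absurd h (ne_of_gt hM)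
        · exact h
      intro j
      have := hi0 j
      have hh : x (Sum.inr ()) = x (Sum.inl a) := by linarith
      rw [hh]; exact hi0 j
    · intro j; rcases a with ⟨⟩; exact hi0 j
  -- step 2: the apex row forces all equal
  have hrow := congrFun hx (Sum.inr ())
  rw [coneLap_mulVec] at hrow
  have hterm : ∀ j ∈ univ, (0:ℝ) ≤ Wf G M (Sum.inr ()) j * (x (Sum.inr ()) - x j) := by
    intro j _
    exact mul_nonneg (Wf_nonneg G M (le_of_lt hM) _ j) (by linarith [hmax j])
  have hz := (Finset.sum_eq_zero_iff_of_nonneg hterm).1 (by rw [hrow]; rfl)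
  refine ⟨x (Sum.inr ()), fun i => ?_⟩
  rcases i with a | a
  · have := hz (Sum.inl a) (Finset.mem_univ _)
    have hW : Wf G M (Sum.inr ()) (Sum.inl a) = M := rfl
    rw [hW] at this
    rcases mul_eq_zero.1 this with h | h
    · exact absurd h (ne_of_gt hM)
    · linarith
  · rcases a with ⟨⟩; rfl

end Cone


noncomputable def wseq (M : ℝ) : ℕ → ℝ
  | 0 => 1
  | 1 => 1
  | (k + 2) => (2 + M) * wseq M (k + 1) - wseq M k

section Wseq
variable (M : ℝ)

@[simp] lemma wseq_zero : wseq M 0 = 1 := rfl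
@[simp] lemma wseq_one : wseq M 1 = 1 := rfl
lemma wseq_rec (k : ℕ) : wseq M (k + 2) = (2 + M) * wseq M (k + 1) - wseq M k := rfl

lemma wseq_two : wseq M 2 = 1 + M := by rw [wseq_rec]; simp; ring

/-- Casoratian identity. -/
lemma wseq_cas (k : ℕ) : wseq M k * wseq M (k + 2) - wseq M (k + 1) ^ 2 = M := by
  induction k with
  | zero => norm_num [wseq_two]
  | succ n ih =>
      rw [wseq_rec M (n + 1)]
      linear_combination ih - wseq M (n + 2) * wseq_rec M n

variable {M} (hM : 2 ≤ M)

include hM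

lemma wseq_mono (k : ℕ) : 1 ≤ wseq M k ∧ wseq M k ≤ wseq M (k + 1) := by
  induction k with
  | zero => simp
  | succ n ih =>
      obtain ⟨h1, h2⟩ := ih
      constructor
      · linarith
      · rw [wseq_rec]; nlinarith

lemma wseq_ge_one (k : ℕ) : 1 ≤ wseq M k := (wseq_mono hM k).1

lemma wseq_le_succ (k : ℕ) : wseq M k ≤ wseq M (k + 1) := (wseq_mono hM k).2

lemma wseq_diff_rec (k : ℕ) :
    wseq M (k + 2) - wseq M (k + 1) = M * wseq M (k + 1) + (wseq M (k + 1) - wseq M k) := by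
  rw [wseq_rec]; ring

lemma wseq_diff_nonneg (k : ℕ) : 0 ≤ wseq M (k + 1) - wseq M k := by
  linarith [wseq_le_succ hM k]

/-- main bounds: for k ≥ 1, M^k ≤ d_k and M^k ≤ w_{k+1}. -/
lemma wseq_bounds (k : ℕ) (hk : 1 ≤ k) :
    M ^ k ≤ wseq M (k + 1) - wseq M k ∧ M ^ k ≤ wseq M (k + 1) := by
  induction k with
  | zero => omega
  | succ n ih =>
      rcases Nat.eq_or_lt_of_le hk with h | h
      · -- n + 1 = 1, i.e. n = 0
        have hn : n = 0 := by omega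
        subst hn
        have h2 : wseq M (0 + 1 + 1) = 1 + M := wseq_two M
        have h1 : wseq M (0 + 1) = 1 := rfl
        rw [h2, h1]
        norm_num
      · have hn : 1 ≤ n := by omega
        obtain ⟨ihd, ihw⟩ := ih hn
        have hw1 : 1 ≤ wseq M (n + 1) := wseq_ge_one hM _
        have hM0 : (0:ℝ) < M := by linarith
        have hMp : (0:ℝ) < M ^ n := pow_pos hM0 n
        have hd : M ^ (n + 1) ≤ wseq M (n + 2) - wseq M (n + 1) := by
          rw [wseq_diff_rec hM]
          have : M ^ (n + 1) = M * M ^ n := by ring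
          rw [this]
          have h1 : M * M ^ n ≤ M * wseq M (n + 1) := by
            apply mul_le_mul_of_nonneg_left ihw (by linarith)
          linarith [wseq_diff_nonneg hM n]
        refine ⟨hd, ?_⟩
        have := wseq_ge_one hM (n + 1)
        linarith
end Wseq


section PathCalc
variable {n : ℕ} {M : ℝ}

lemma Wf_inl_inr {V : Type*} [Fintype V] [DecidableEq V] (G : SimpleGraph V) (M : ℝ)
    (a : V) (u : Unit) : Wf G M (Sum.inl a) (Sum.inr u) = M := rfl
lemma Wf_inr_inl {V : Type*} [Fintype V] [DecidableEq V] (G : SimpleGraph V) (M : ℝ)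
    (a : V) (u : Unit) : Wf G M (Sum.inr u) (Sum.inl a) = M := rfl
lemma Wf_inr_inr {V : Type*} [Fintype V] [DecidableEq V] (G : SimpleGraph V) (M : ℝ)
    (u u' : Unit) : Wf G M (Sum.inr u) (Sum.inr u') = 0 := rfl

lemma wseq_sum (M : ℝ) (n : ℕ) :
    M * ∑ k ∈ Finset.range n, wseq M (k + 1) = wseq M (n + 1) - wseq M n := by
  induction n with
  | zero => simp
  | succ n ih => rw [Finset.sum_range_succ, mul_add, ih, wseq_rec]; ring

lemma path_nbr_sum (j : Fin n) (e : ℕ → ℝ) :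
    ∑ a : Fin n, Wf (SimpleGraph.pathGraph n) M (Sum.inl j) (Sum.inl a) * (e ↑j - e ↑a)
      = (if (↑j + 1 < n) then e ↑j - e (↑j + 1) else 0)
        + (if 0 < (j:ℕ) then e ↑j - e (↑j - 1) else 0) := by
  have hconv : ∀ a : Fin n,
      Wf (SimpleGraph.pathGraph n) M (Sum.inl j) (Sum.inl a) * (e ↑j - e ↑a)
      = (if ((j:ℕ) + 1 = ↑a) then e ↑j - e ↑a else 0)
        + (if ((a:ℕ) + 1 = ↑j) then e ↑j - e ↑a else 0) := by
    intro a
    simp only [Wf]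
    by_cases h : (SimpleGraph.pathGraph n).Adj j a
    · rw [if_pos h]
      rcases SimpleGraph.pathGraph_adj.1 h with h' | h'
      · rw [if_pos h', if_neg (by omega)]; ring
      · rw [if_neg (by omega), if_pos h']; ring
    · rw [if_neg h]
      have h2 := fun hh : ((j:ℕ) + 1 = ↑a ∨ (a:ℕ) + 1 = ↑j) => h (SimpleGraph.pathGraph_adj.2 hh)
      rw [if_neg (by tauto), if_neg (by tauto)]
      ring
  rw [Finset.sum_congr rfl fun a _ => hconv a, Finset.sum_add_distrib]
  congr 1
  · rw [Fin.sum_univ_eq_sum_range (fun k => if ((j:ℕ) + 1 = k) then e ↑j - e k else 0) n,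
      Finset.sum_ite_eq (Finset.range n) ((j:ℕ) + 1) (fun k => e ↑j - e k)]
    simp only [Finset.mem_range]
  · rcases Nat.eq_zero_or_pos (j : ℕ) with h0 | h0
    · rw [if_neg (by omega)]
      apply Finset.sum_eq_zero
      intro a _
      rw [if_neg (by omega)]
    · rw [if_pos h0]
      obtain ⟨t, ht⟩ : ∃ t, (j:ℕ) = t + 1 := ⟨(j:ℕ) - 1, by omega⟩
      rw [Fin.sum_univ_eq_sum_range (fun k => if (k + 1 = ↑j) then e ↑j - e k else 0) n]
      have hcong : ∀ k ∈ Finset.range n,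
          (if (k + 1 = ↑j) then e ↑j - e k else 0) = (if (t = k) then e ↑j - e k else 0) := by
        intro k _
        by_cases hk : k + 1 = (j:ℕ)
        · rw [if_pos hk, if_pos (by omega)]
        · rw [if_neg hk, if_neg (by omega)]
      rw [Finset.sum_congr rfl hcong,
        Finset.sum_ite_eq (Finset.range n) t (fun k => e ↑j - e k),
        if_pos (Finset.mem_range.2 (by omega))]
      congr 2
      omega

noncomputable def xvec (n : ℕ) (M : ℝ) : Fin n ⊕ Unit → ℝ :=
  Sum.elim (fun j => wseq M (n - (j:ℕ)) / (wseq M (n + 1) - wseq M n)) (fun _ => 0)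

lemma xvec_inl (a : Fin n) :
    xvec n M (Sum.inl a) = wseq M (n - (a:ℕ)) / (wseq M (n + 1) - wseq M n) := rfl
lemma xvec_inr (u : Unit) : xvec n M (Sum.inr u) = 0 := rfl

lemma dn_pos (hM : 2 ≤ M) (hn : 1 ≤ n) : 0 < wseq M (n + 1) - wseq M n :=
  lt_of_lt_of_le (pow_pos (by linarith) n) (wseq_bounds hM n hn).1

lemma xvec_solution (hn : 1 ≤ n) (hM : 2 ≤ M) (z : Fin n) (hz : (z:ℕ) = 0) :
    coneLap (SimpleGraph.pathGraph n) M *ᵥ xvec n M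
      = Pi.single (Sum.inl z) 1 - Pi.single (Sum.inr ()) 1 := by
  have hM0 : (0:ℝ) < M := by linarith
  have hd0 : wseq M (n + 1) - wseq M n ≠ 0 := ne_of_gt (dn_pos hM hn)
  funext i
  rw [coneLap_mulVec]
  rcases i with j | u
  · -- path row
    rw [Fintype.sum_sum_type]
    simp only [xvec_inl, xvec_inr, Wf_inl_inr, Fintype.sum_unique, sub_zero]
    rw [path_nbr_sum j (fun k => wseq M (n - k) / (wseq M (n + 1) - wseq M n))]
    have hRHS : ((Pi.single (Sum.inl z) 1 - Pi.single (Sum.inr ()) 1 :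
          (Fin n ⊕ Unit) → ℝ)) (Sum.inl j) = if (j:ℕ) = 0 then 1 else 0 := by
      simp only [Pi.sub_apply, Pi.single_apply]
      by_cases hj : (j:ℕ) = 0
      · rw [if_pos hj, if_pos (by rw [Sum.inl.injEq]; exact Fin.ext (by omega)),
          if_neg (by simp)]
        norm_num
      · have hne : ¬((Sum.inl j : Fin n ⊕ Unit) = Sum.inl z) := by
          intro hh
          rw [Sum.inl.injEq] at hh
          apply hj
          rw [hh, hz]
        rw [if_neg hj, if_neg hne, if_neg (by simp)]
        norm_num
    rw [hRHS]
    by_cases hj0 : (j:ℕ) = 0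
    · rw [hj0]
      rw [if_pos (show (0:ℕ) = 0 from rfl)]
      rw [if_neg (show ¬((0:ℕ) < 0) by omega)]
      rcases Nat.lt_or_ge n 2 with hn1 | hn2
      · -- n = 1
        have hn' : n = 1 := by omega
        subst hn'
        rw [if_neg (show ¬(0 + 1 < 1) by omega)]
        have h2 : wseq M (1 + 1) = 1 + M := wseq_two M
        have h1 : wseq M (1 - 0) = 1 := rfl
        rw [h2, h1]
        have hden : (1:ℝ) + M - 1 = M := by ring
        rw [hden]
        field_simp
        ring
      · -- n ≥ 2
        obtain ⟨k, hk⟩ : ∃ k, n = k + 2 := ⟨n - 2, by omega⟩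
        subst hk
        rw [if_pos (show 0 + 1 < k + 2 by omega)]
        have e1 : k + 2 - 0 = k + 2 := rfl
        have e2 : k + 2 - (0 + 1) = k + 1 := rfl
        rw [e1, e2]
        have hr : wseq M (k + 2 + 1) = (2 + M) * wseq M (k + 2) - wseq M (k + 1) :=
          wseq_rec M (k + 1)
        rw [hr] at hd0 ⊢
        field_simp
        have hd0' : wseq M (k + 2) * (2 + M) - wseq M (k + 1) - wseq M (k + 2) ≠ 0 := by
          rw [mul_comm]; exact hd0
        rw [add_zero, ← add_div, div_eq_one_iff_eq hd0']
        ring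
    · -- j ≥ 1 : target 0
      rw [if_neg hj0, if_pos (show 0 < (j:ℕ) by omega)]
      rcases Nat.lt_or_ge ((j:ℕ) + 1) n with hlt | hge
      · -- interior
        rw [if_pos hlt]
        obtain ⟨k, hk⟩ : ∃ k, n - (j:ℕ) = k + 2 := ⟨n - (j:ℕ) - 2, by omega⟩
        have e1 : n - ((j:ℕ) + 1) = k + 1 := by omega
        have e2 : n - ((j:ℕ) - 1) = k + 3 := by omega
        rw [hk, e1, e2]
        have hr : wseq M (k + 3) = (2 + M) * wseq M (k + 2) - wseq M (k + 1) :=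
          wseq_rec M (k + 1)
        rw [hr]
        field_simp
        ring
      · -- last vertex
        rw [if_neg (show ¬((j:ℕ) + 1 < n) by omega)]
        have e1 : n - (j:ℕ) = 1 := by omega
        have e2 : n - ((j:ℕ) - 1) = 2 := by omega
        rw [e1, e2, wseq_two, wseq_one]
        field_simp
        ring
  · -- apex row
    rw [Fintype.sum_sum_type]
    simp only [xvec_inl, xvec_inr, Wf_inr_inl, Wf_inr_inr, Fintype.sum_unique,
      zero_mul, add_zero, zero_sub, mul_neg]
    have hRHS : ((Pi.single (Sum.inl z) 1 - Pi.single (Sum.inr ()) 1 :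
          (Fin n ⊕ Unit) → ℝ)) (Sum.inr u) = -1 := by
      simp [Pi.single_apply]
    rw [hRHS]
    have hS : ∑ a : Fin n, wseq M (n - (a:ℕ)) = ∑ k ∈ Finset.range n, wseq M (k + 1) := by
      rw [Fin.sum_univ_eq_sum_range (fun k => wseq M (n - k)) n, ← Finset.sum_range_reflect]
      refine Finset.sum_congr rfl fun k hk => ?_
      have := Finset.mem_range.1 hk
      congr 1
      omega
    have hstep : ∑ a : Fin n, -(M * (wseq M (n - (a:ℕ)) / (wseq M (n + 1) - wseq M n)))
        = -(M * (∑ a : Fin n, wseq M (n - (a:ℕ))) / (wseq M (n + 1) - wseq M n)) := by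
      rw [Finset.mul_sum, Finset.sum_div, ← Finset.sum_neg_distrib]
      exact Finset.sum_congr rfl fun a _ => by ring
    rw [hstep, hS, wseq_sum]
    field_simp
    ring
end PathCalc

lemma fan_effRes (n : ℕ) (hn : 1 ≤ n) (M : ℝ) (hM : 2 ≤ M) (z : Fin n) (hz : (z:ℕ) = 0) :
    effRes (coneLap (SimpleGraph.pathGraph n) M) (Sum.inl z) (Sum.inr ())
      = wseq M n / (wseq M (n + 1) - wseq M n) := by
  have h := effRes_eq_of_solution (coneLap (SimpleGraph.pathGraph n) M)
    (coneLap_transpose _ _) (coneLap_mulVec_one _ _)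
    (fun y hy => coneLap_ker _ _ (by linarith : (0:ℝ) < M) y hy)
    (Sum.inl z) (Sum.inr ()) (by simp) (xvec n M)
    (xvec_solution hn hM z hz)
  rw [h, xvec_inl, xvec_inr, hz]
  rw [Nat.sub_zero, sub_zero]


/-- Asymptotics of apex-to-endpoint effective resistances in weighted fan graphs. -/
theorem effRes_fan_apex_diff (n m : ℕ) (hn : 1 ≤ n) (hm : 1 < m) :
    0 < effRes (coneLap (SimpleGraph.pathGraph n) m)
          (Sum.inl ⟨0, by omega⟩) (Sum.inr ())
        - effRes (coneLap (SimpleGraph.pathGraph (n + 1)) m)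
            (Sum.inl ⟨0, by omega⟩) (Sum.inr ())
    ∧ effRes (coneLap (SimpleGraph.pathGraph n) m)
          (Sum.inl ⟨0, by omega⟩) (Sum.inr ())
        - effRes (coneLap (SimpleGraph.pathGraph (n + 1)) m)
            (Sum.inl ⟨0, by omega⟩) (Sum.inr ())
      < 1 / m ^ n := by
  set M : ℝ := (m : ℝ) with hMdef
  have hM : 2 ≤ M := by
    rw [hMdef]
    exact_mod_cast hm
  have hM0 : (0:ℝ) < M := by linarith
  have e1 := fan_effRes n hn M hM ⟨0, by omega⟩ rfl
  have e2 := fan_effRes (n + 1) (by omega) M hM ⟨0, by omega⟩ rfl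
  rw [e1, e2]
  have hcas : wseq M n * wseq M (n + 2) - wseq M (n + 1) ^ 2 = M := wseq_cas M n
  have hd1 : M ^ n ≤ wseq M (n + 1) - wseq M n := (wseq_bounds hM n hn).1
  have hd2 : M ^ (n + 1) ≤ wseq M (n + 2) - wseq M (n + 1) :=
    (wseq_bounds hM (n + 1) (by omega)).1
  have hp1 : 0 < wseq M (n + 1) - wseq M n := dn_pos hM hn
  have hp2 : 0 < wseq M (n + 2) - wseq M (n + 1) := dn_pos hM (by omega : 1 ≤ n + 1)
  have hkey : wseq M n / (wseq M (n + 1) - wseq M n)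
      - wseq M (n + 1) / (wseq M (n + 2) - wseq M (n + 1))
      = M / ((wseq M (n + 1) - wseq M n) * (wseq M (n + 2) - wseq M (n + 1))) := by
    rw [div_sub_div _ _ (ne_of_gt hp1) (ne_of_gt hp2)]
    rw [mul_comm (wseq M (n + 1) - wseq M n)]
    congr 1
    linear_combination hcas
  rw [hkey]
  constructor
  · exact div_pos hM0 (mul_pos hp1 hp2)
  · rw [div_lt_div_iff₀ (mul_pos hp1 hp2) (pow_pos hM0 n)]
    have hstep : M ^ n * M ^ (n + 1)
        ≤ (wseq M (n + 1) - wseq M n) * (wseq M (n + 2) - wseq M (n + 1)) :=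
      mul_le_mul hd1 hd2 (le_of_lt (pow_pos hM0 (n + 1))) (le_of_lt hp1)
    have hMn1 : (1:ℝ) < M ^ n := one_lt_pow₀ (by linarith) (by omega)
    have h2 : M * M ^ n < M ^ n * M ^ (n + 1) := by
      have h3 := mul_pos (sub_pos.2 hMn1) (mul_pos hM0 (pow_pos hM0 n))
      rw [pow_succ]
      nlinarith [h3]
    nlinarith
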